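/- Let σ be a class-KL function (continuous, increasing in first argument with σ(0,t)=0, and non-increasing in second argument with limit 0 as t→∞). Then there exist class-K∞ functions a₁, a₂ such that σ(s,t) ≤ a₁(exp(−t)·a₂(s)) for all s,t ≥ 0. -/

import Mathlib

open Filter Real Set Topology

noncomputable section

def PL (u : ℤ → ℝ) (y : ℝ) : ℝ :=
  u ⌊y⌋ + (y - ⌊y⌋) * (u (⌊y⌋ + 1) - u ⌊y⌋)

lemma PL_int (u : ℤ → ℝ) (n : ℤ) : PL u n = u n := by
  simp [PL]

lemma PL_ge (u : ℤ → ℝ) (hu : Monotone u) (y : ℝ) : u ⌊y⌋ ≤ PL u y := by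
  have h1 : 0 ≤ y - ⌊y⌋ := by
    have := Int.floor_le y; linarith
  have h2 : u ⌊y⌋ ≤ u (⌊y⌋ + 1) := hu (by omega)
  unfold PL; nlinarith

lemma PL_le (u : ℤ → ℝ) (hu : Monotone u) (y : ℝ) : PL u y ≤ u (⌊y⌋ + 1) := by
  have h1 : y - ⌊y⌋ ≤ 1 := by
    have := (Int.lt_floor_add_one y).le; linarith
  have h2 : u ⌊y⌋ ≤ u (⌊y⌋ + 1) := hu (by omega)
  have h0 : 0 ≤ y - ⌊y⌋ := by
    have := Int.floor_le y; linarith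
  unfold PL; nlinarith

lemma PL_mono (u : ℤ → ℝ) (hu : Monotone u) : Monotone (PL u) := by
  intro a b hab
  rcases eq_or_lt_of_le (Int.floor_le_floor hab) with h | h
  · unfold PL
    rw [← h]
    have h2 : u ⌊a⌋ ≤ u (⌊a⌋ + 1) := hu (by omega)
    nlinarith
  · calc PL u a ≤ u (⌊a⌋ + 1) := PL_le u hu a
      _ ≤ u ⌊b⌋ := hu (by omega)
      _ ≤ PL u b := PL_ge u hu b

lemma PL_floor_eq (u : ℤ → ℝ) {n : ℤ} {z : ℝ} (h1 : (n : ℝ) ≤ z) (h2 : z < n + 1) :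
    PL u z = u n + (z - n) * (u (n + 1) - u n) := by
  have : ⌊z⌋ = n := Int.floor_eq_iff.2 ⟨h1, h2⟩
  simp only [PL, this]

lemma PL_continuous (u : ℤ → ℝ) : Continuous (PL u) := by
  rw [continuous_iff_continuousAt]
  intro y
  rcases eq_or_lt_of_le (Int.floor_le y) with h | h
  · obtain ⟨n, rfl⟩ : ∃ n : ℤ, y = (n : ℝ) := ⟨⌊y⌋, h.symm⟩
    rw [continuousAt_iff_continuous_left_right]
    constructor
    · have hmem : Iic (n : ℝ) ∩ Ioi ((n : ℝ) - 1) ∈ 𝓝[≤] (n : ℝ) :=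
        inter_mem_nhdsWithin _ (Ioi_mem_nhds (by linarith))
      have haff : ContinuousWithinAt
          (fun z : ℝ => u (n - 1) + (z - ((n : ℝ) - 1)) * (u (n - 1 + 1) - u (n - 1)))
          (Iic (n : ℝ)) n :=
        (Continuous.continuousWithinAt (by fun_prop))
      apply haff.congr_of_eventuallyEq _ ?_
      · filter_upwards [hmem] with z hz
        rcases eq_or_lt_of_le (mem_Iic.1 hz.1) with hz2 | hz2
        · subst hz2
          rw [PL_int]
          push_cast
          ring
        · rw [PL_floor_eq u (n := n - 1) (by push_cast; linarith [mem_Ioi.1 hz.2]) (by push_cast; linarith)]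
          push_cast
          ring
      · rw [PL_int]
        push_cast
        ring
    · have hmem : Ici (n : ℝ) ∩ Iio ((n : ℝ) + 1) ∈ 𝓝[≥] (n : ℝ) :=
        inter_mem_nhdsWithin _ (Iio_mem_nhds (by linarith))
      have haff : ContinuousWithinAt
          (fun z : ℝ => u n + (z - (n : ℝ)) * (u (n + 1) - u n))
          (Ici (n : ℝ)) n :=
        (Continuous.continuousWithinAt (by fun_prop))
      apply haff.congr_of_eventuallyEq _ ?_
      · filter_upwards [hmem] with z hz
        rw [PL_floor_eq u (n := n) (mem_Ici.1 hz.1) (by push_cast; linarith [mem_Iio.1 hz.2])]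
      · rw [PL_int]; ring
  · have hlt := Int.lt_floor_add_one y
    have : ContinuousAt (fun z : ℝ => u ⌊y⌋ + (z - ⌊y⌋) * (u (⌊y⌋ + 1) - u ⌊y⌋)) y := by fun_prop
    apply this.congr
    have hmem : Ioo ((⌊y⌋ : ℝ)) (⌊y⌋ + 1) ∈ 𝓝 y := Ioo_mem_nhds h hlt
    filter_upwards [hmem] with z hz
    rw [PL_floor_eq u (n := ⌊y⌋) hz.1.le (by push_cast; linarith [hz.2])]

lemma PL_tendsto_atBot (u : ℤ → ℝ) (hu : Monotone u) (h : Tendsto u atBot (𝓝 0)) :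
    Tendsto (PL u) atBot (𝓝 0) := by
  have hlow : Tendsto (fun y : ℝ => u ⌊y⌋) atBot (𝓝 0) :=
    h.comp tendsto_floor_atBot
  have hhigh : Tendsto (fun y : ℝ => u (⌊y⌋ + 1)) atBot (𝓝 0) :=
    h.comp (tendsto_atBot_add_const_right _ 1 tendsto_floor_atBot)
  exact tendsto_of_tendsto_of_tendsto_of_le_of_le hlow hhigh
    (fun y => PL_ge u hu y) (fun y => PL_le u hu y)


def ClassK (a : ℝ → ℝ) : Prop :=
  ContinuousOn a (Set.Ici 0) ∧ StrictMonoOn a (Set.Ici 0) ∧ a 0 = 0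

def ClassKInf (a : ℝ → ℝ) : Prop :=
  ClassK a ∧ Filter.Tendsto a Filter.atTop Filter.atTop

def ClassKL (σ : ℝ → ℝ → ℝ) : Prop :=
  ContinuousOn (fun p : ℝ × ℝ => σ p.1 p.2) (Set.Ici 0 ×ˢ Set.Ici 0) ∧
  (∀ t ≥ (0:ℝ), StrictMonoOn (fun s => σ s t) (Set.Ici 0) ∧ σ 0 t = 0) ∧
  (∀ s ≥ (0:ℝ), AntitoneOn (fun t => σ s t) (Set.Ici 0) ∧
    Filter.Tendsto (fun t => σ s t) Filter.atTop (nhds 0))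

theorem stmt0 (σ : ℝ → ℝ → ℝ) (hσ : ClassKL σ) :
    ∃ a₁ a₂ : ℝ → ℝ, ClassKInf a₁ ∧ ClassKInf a₂ ∧
      ∀ s ≥ (0:ℝ), ∀ t ≥ (0:ℝ), σ s t ≤ a₁ (Real.exp (-t) * a₂ s) := by
  obtain ⟨hcont, hmono, hdecay⟩ := hσ
  -- basic facts about σ
  have σ0 : ∀ t ≥ (0:ℝ), σ 0 t = 0 := fun t ht => (hmono t ht).2
  have σMs : ∀ t ≥ (0:ℝ), MonotoneOn (fun s => σ s t) (Set.Ici 0) :=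
    fun t ht => (hmono t ht).1.monotoneOn
  have σnn : ∀ s ≥ (0:ℝ), ∀ t ≥ (0:ℝ), 0 ≤ σ s t := by
    intro s hs t ht
    have h2 := σMs t ht (self_mem_Ici) hs hs
    simpa [σ0 t ht] using h2
  have σAt : ∀ s ≥ (0:ℝ), AntitoneOn (fun t => σ s t) (Set.Ici 0) :=
    fun s hs => (hdecay s hs).1
  have σTd : ∀ s ≥ (0:ℝ), Tendsto (fun t => σ s t) atTop (𝓝 0) :=
    fun s hs => (hdecay s hs).2
  -- construction of τ
  have hT : ∀ n : ℕ, ∃ T, ∀ t ≥ T, σ ((n : ℝ) + 1) t ≤ 1 / ((n : ℝ) + 1) := by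
    intro n
    have h1 := σTd ((n : ℝ) + 1) (by positivity)
    have h2 : ∀ᶠ t in atTop, σ ((n : ℝ) + 1) t < 1 / ((n : ℝ) + 1) :=
      h1.eventually_lt_const (by positivity)
    obtain ⟨T, hT⟩ := eventually_atTop.1 h2
    exact ⟨T, fun t ht => (hT t ht).le⟩
  choose T hTspec using hT
  obtain ⟨τ, hτ0, hτsucc⟩ :
      ∃ τ : ℕ → ℝ, τ 0 = 0 ∧ ∀ n, τ (n + 1) = max (τ n + n + 1) (T n) :=
    ⟨fun n => Nat.rec 0 (fun n ih => max (ih + n + 1) (T n)) n, rfl, fun n => rfl⟩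
  have hτinc : ∀ n, τ n + n + 1 ≤ τ (n + 1) := fun n => (hτsucc n) ▸ le_max_left _ _
  have hτnn : ∀ n, 0 ≤ τ n := by
    intro n
    induction n with
    | zero => exact hτ0.ge
    | succ n ih => have := hτinc n; push_cast at this ⊢; linarith [Nat.cast_nonneg (α := ℝ) n]
  have hτmono : Monotone τ := by
    apply monotone_nat_of_le_succ
    intro n
    have := hτinc n
    have : (0:ℝ) ≤ n := Nat.cast_nonneg n
    linarith [hτinc n]
  have hP : ∀ n : ℕ, ∀ t ≥ τ (n + 1), σ ((n : ℝ) + 1) t ≤ 1 / ((n : ℝ) + 1) := by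
    intro n t ht
    exact hTspec n t (le_trans ((hτsucc n) ▸ le_max_right _ _) ht)
  have hgap : ∀ j : ℕ, τ (j + 2) + (2 * (j:ℝ) + 7) ≤ τ (j + 4) := by
    intro j
    have h1 := hτinc (j + 2)
    have h2 := hτinc (j + 3)
    push_cast at h1 h2
    linarith
  -- the function f and its sup S
  set f : ℕ → ℝ → ℝ := fun j y => σ ((j : ℝ) + 2) (max 0 (τ (j + 4) - y)) with hfdef
  have fnn : ∀ j y, 0 ≤ f j y :=
    fun j y => σnn _ (by positivity) _ (le_max_left _ _)
  have hPf : ∀ j : ℕ, ∀ t ≥ τ (j + 2), σ ((j:ℝ) + 2) t ≤ 1 / ((j:ℝ) + 2) := by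
    intro j t ht
    have h2 := hP (j + 1) t ht
    have e : ((j + 1 : ℕ) : ℝ) + 1 = (j : ℝ) + 2 := by push_cast; ring
    rw [e] at h2
    exact h2
  have fbound1 : ∀ j : ℕ, ∀ y : ℝ, y ≤ 2 * (j:ℝ) + 7 → f j y ≤ 1 / ((j:ℝ) + 2) := by
    intro j y hy
    exact hPf j _ (le_max_of_le_right (by linarith [hgap j]))
  have fmono : ∀ j, Monotone (f j) := by
    intro j y y' hyy
    apply σAt ((j:ℝ)+2) (by positivity) (mem_Ici.2 (le_max_left _ _)) (mem_Ici.2 (le_max_left _ _))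
    exact max_le_max le_rfl (by linarith)
  have fbdd : ∀ y, BddAbove (Set.range (fun j => f j y)) := by
    intro y
    refine ⟨max 1 (σ (max 2 (y / 2 + 2)) 0), ?_⟩
    rintro _ ⟨j, rfl⟩
    rcases le_or_gt y (2 * (j:ℝ) + 7) with h | h
    · refine le_max_of_le_left ((fbound1 j y h).trans ?_)
      rw [div_le_one (by positivity)]
      linarith [Nat.cast_nonneg (α := ℝ) j]
    · refine le_max_of_le_right ?_
      have h1 : f j y ≤ σ ((j:ℝ) + 2) 0 := by
        apply σAt ((j:ℝ)+2) (by positivity) (mem_Ici.2 le_rfl) (mem_Ici.2 (le_max_left _ _)) (le_max_left _ _)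
      refine h1.trans (σMs 0 le_rfl (mem_Ici.2 (by positivity)) ?_ ?_)
      · exact mem_Ici.2 (le_max_of_le_left (by norm_num))
      · exact le_max_of_le_right (by linarith)
  set S : ℝ → ℝ := fun y => ⨆ j, f j y with hSdef
  have Sle : ∀ j y, f j y ≤ S y := fun j y => le_ciSup (fbdd y) j
  have Snn : ∀ y, 0 ≤ S y := fun y => (fnn 0 y).trans (Sle 0 y)
  have Smono : Monotone S := by
    intro y y' h
    exact ciSup_mono (fbdd y') (fun j => fmono j h)
  have Stendsto : Tendsto S atBot (𝓝 0) := by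
    rw [tendsto_order]
    constructor
    · intro b hb
      exact Eventually.of_forall (fun y => lt_of_lt_of_le hb (Snn y))
    · intro b hb
      obtain ⟨N, hN⟩ := exists_nat_gt (1 / b)
      have hN0 : 0 < N := by
        by_contra h
        push_neg at h
        interval_cases N
        simp at hN
        linarith [one_div_pos.2 hb]
      have hTj : ∀ j : ℕ, ∃ Tb, ∀ t ≥ Tb, σ ((j:ℝ) + 2) t < b / 2 := by
        intro j
        have h2 : ∀ᶠ t in atTop, σ ((j:ℝ) + 2) t < b / 2 :=
          (σTd ((j:ℝ)+2) (by positivity)).eventually_lt_const (by linarith)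
        obtain ⟨Tb, hTb⟩ := eventually_atTop.1 h2
        exact ⟨Tb, hTb⟩
      choose Tb hTb using hTj
      set Y : ℝ := min 7 ((Finset.range N).inf' (Finset.nonempty_range_iff.2 hN0.ne') (fun j => τ (j + 4) - Tb j)) with hY
      have key : ∀ y ≤ Y, S y < b := by
        intro y hy
        have hy7 : y ≤ 7 := hy.trans (min_le_left _ _)
        have hc : S y ≤ max (1 / ((N:ℝ) + 2)) (b / 2) := by
          apply ciSup_le
          intro j
          rcases lt_or_ge j N with hj | hj
          · refine le_max_of_le_right ?_
            have hyj : y ≤ τ (j + 4) - Tb j :=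
              hy.trans ((min_le_right _ _).trans
                (Finset.inf'_le _ (Finset.mem_range.2 hj)))
            refine (hTb j _ (le_max_of_le_right (by linarith))).le
          · refine le_max_of_le_left ?_
            refine (fbound1 j y (by push_cast; linarith [Nat.cast_nonneg (α := ℝ) j])).trans ?_
            apply one_div_le_one_div_of_le (by positivity)
            have : (N:ℝ) ≤ j := by exact_mod_cast hj
            linarith
        have h1 : 1 / ((N:ℝ) + 2) < b := by
          rw [div_lt_iff₀ (by positivity)]
          rw [div_lt_iff₀ hb] at hN
          nlinarith
        exact lt_of_le_of_lt hc (max_lt h1 (by linarith))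
      filter_upwards [Iic_mem_atBot Y] with y hy using key y hy
  -- the function a₂
  set g : ℤ → ℝ := fun k => τ (k.toNat + 3) with hgdef
  have gmono : Monotone g :=
    fun k k' h => hτmono (Nat.add_le_add_right (Int.toNat_le_toNat h) 3)
  have gnn : ∀ k, 0 ≤ g k := fun k => hτnn _
  set a₂ : ℝ → ℝ := fun s => s * Real.exp (PL g s) with ha₂def
  have hPLg : ∀ s : ℝ, 0 ≤ PL g s := fun s => (gnn _).trans (PL_ge g gmono s)
  have ha₂0 : a₂ 0 = 0 := zero_mul _
  have ha₂ge : ∀ s ≥ (0:ℝ), s ≤ a₂ s := by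
    intro s hs
    refine le_mul_of_one_le_right hs ?_
    calc (1:ℝ) = Real.exp 0 := Real.exp_zero.symm
      _ ≤ Real.exp (PL g s) := Real.exp_le_exp.2 (hPLg s)
  have ha₂pos : ∀ s : ℝ, 0 < s → 0 < a₂ s := fun s hs => mul_pos hs (Real.exp_pos _)
  have ha₂mono : StrictMonoOn a₂ (Set.Ici 0) := by
    intro a ha b hb hab
    have h1 : a₂ a ≤ a * Real.exp (PL g b) :=
      mul_le_mul_of_nonneg_left (Real.exp_le_exp.2 (PL_mono g gmono hab.le)) ha
    have h2 : a * Real.exp (PL g b) < b * Real.exp (PL g b) :=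
      mul_lt_mul_of_pos_right hab (Real.exp_pos _)
    exact lt_of_le_of_lt h1 h2
  have ha₂cont : Continuous a₂ :=
    continuous_id.mul (Real.continuous_exp.comp (PL_continuous g))
  have ha₂top : Tendsto a₂ atTop atTop := by
    apply tendsto_atTop_mono' _ _ tendsto_id
    filter_upwards [Ici_mem_atTop (0:ℝ)] with s hs using ha₂ge s hs
  -- the sequence w
  set c1 : ℤ → ℝ := fun k => σ (Real.exp (((k:ℝ) + 1) / 2)) 0 with hc1def
  set c2 : ℤ → ℝ := fun k => σ 1 (max 0 (-((k:ℝ) + 1) / 2)) with hc2def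
  set c3 : ℤ → ℝ := fun k => S ((k:ℝ) + 1) with hc3def
  set w : ℤ → ℝ := fun k => max (c1 k) (max (c2 k) (c3 k)) with hwdef
  have c1mono : Monotone c1 := by
    intro k k' h
    have hkk : (k:ℝ) ≤ k' := by exact_mod_cast h
    refine σMs 0 le_rfl (mem_Ici.2 (Real.exp_pos _).le) (mem_Ici.2 (Real.exp_pos _).le)
      (Real.exp_le_exp.2 (by linarith))
  have c2mono : Monotone c2 := by
    intro k k' h
    refine σAt 1 zero_le_one (mem_Ici.2 (le_max_left _ _)) (mem_Ici.2 (le_max_left _ _)) ?_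
    refine max_le_max le_rfl ?_
    have : (k:ℝ) ≤ k' := by exact_mod_cast h
    linarith
  have c3mono : Monotone c3 := by
    intro k k' h
    refine Smono ?_
    have : (k:ℝ) ≤ k' := by exact_mod_cast h
    linarith
  have wmono : Monotone w :=
    fun k k' h => max_le_max (c1mono h) (max_le_max (c2mono h) (c3mono h))
  have wnn : ∀ k, 0 ≤ w k :=
    fun k => le_max_of_le_left (σnn _ (Real.exp_pos _).le 0 le_rfl)
  have hkcast : Tendsto (fun k : ℤ => (k:ℝ)) atBot atBot :=
    tendsto_intCast_atBot_iff.2 tendsto_id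
  have hk1cast : Tendsto (fun k : ℤ => (k:ℝ) + 1) atBot atBot :=
    tendsto_atBot_add_const_right _ 1 hkcast
  have contσ0 : ContinuousOn (fun s : ℝ => σ s 0) (Set.Ici 0) := by
    have h2 := ContinuousOn.comp (f := fun s : ℝ => (s, (0:ℝ))) hcont
      (Continuous.continuousOn (by fun_prop)) (fun s hs => ⟨hs, self_mem_Ici⟩)
    exact h2
  have t1 : Tendsto c1 atBot (𝓝 0) := by
    have e1 : Tendsto (fun k : ℤ => Real.exp (((k:ℝ) + 1) / 2)) atBot (𝓝 0) :=
      Real.tendsto_exp_atBot.comp (hk1cast.atBot_div_const (by norm_num))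
    have e2 : Tendsto (fun k : ℤ => Real.exp (((k:ℝ) + 1) / 2)) atBot (𝓝[Set.Ici 0] 0) :=
      tendsto_nhdsWithin_iff.2 ⟨e1, Eventually.of_forall fun k => mem_Ici.2 (Real.exp_pos _).le⟩
    have e3 : Tendsto (fun s : ℝ => σ s 0) (𝓝[Set.Ici 0] 0) (𝓝 0) := by
      have := contσ0 0 self_mem_Ici
      rw [ContinuousWithinAt, σ0 0 le_rfl] at this
      exact this
    exact e3.comp e2
  have t2 : Tendsto c2 atBot (𝓝 0) := by
    have e1 : Tendsto (fun k : ℤ => -((k:ℝ) + 1) / 2) atBot atTop :=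
      (tendsto_neg_atBot_atTop.comp hk1cast).atTop_div_const (by norm_num)
    have e2 : Tendsto (fun k : ℤ => max 0 (-((k:ℝ) + 1) / 2)) atBot atTop :=
      tendsto_atTop_mono (fun k => le_max_right _ _) e1
    exact (σTd 1 zero_le_one).comp e2
  have t3 : Tendsto c3 atBot (𝓝 0) := Stendsto.comp hk1cast
  have wtendsto : Tendsto w atBot (𝓝 0) := by
    have := t1.max (t2.max t3)
    simpa using this
  -- the function a₁
  set E : ℝ → ℝ := fun x => if x ≤ 0 then 0 else PL w (Real.log x) with hEdef
  set a₁ : ℝ → ℝ := fun x => x + E x with ha₁def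
  have Enn : ∀ x, 0 ≤ E x := by
    intro x
    by_cases h : x ≤ 0
    · simp [hEdef, h]
    · simpa [hEdef, h] using (wnn _).trans (PL_ge w wmono (Real.log x))
  have Emono : ∀ x x' : ℝ, 0 ≤ x → x ≤ x' → E x ≤ E x' := by
    intro x x' hx h
    by_cases h0 : x ≤ 0
    · simpa [hEdef, h0] using Enn x'
    · have hx0 : 0 < x := not_le.1 h0
      have hx'0 : 0 < x' := lt_of_lt_of_le hx0 h
      simpa [hEdef, not_le.2 hx0, not_le.2 hx'0] using
        PL_mono w wmono (Real.log_le_log hx0 h)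
  have h10 : a₁ 0 = 0 := by simp [ha₁def, hEdef]
  have h1mono : StrictMonoOn a₁ (Set.Ici 0) := by
    intro a ha b hb hab
    exact add_lt_add_of_lt_of_le hab (Emono a b (mem_Ici.1 ha) hab.le)
  have h1cont : ContinuousOn a₁ (Set.Ici 0) := by
    refine (continuous_id.continuousOn).add ?_
    intro x hx
    rcases eq_or_lt_of_le (mem_Ici.1 hx) with h | h
    · subst h
      rw [ContinuousWithinAt]
      have hE0 : E 0 = 0 := by simp [hEdef]
      rw [hE0]
      have hsplit : Set.Ici (0:ℝ) = {0} ∪ Set.Ioi 0 := by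
        ext z; simp [le_iff_lt_or_eq, mem_Ici, mem_Ioi]
      rw [hsplit, nhdsWithin_union, tendsto_sup]
      constructor
      · rw [nhdsWithin_singleton]
        have := tendsto_pure_nhds E 0
        rwa [hE0] at this
      · have e1 : Tendsto (fun x : ℝ => PL w (Real.log x)) (𝓝[>] (0:ℝ)) (𝓝 0) :=
          (PL_tendsto_atBot w wmono wtendsto).comp Real.tendsto_log_nhdsGT_zero
        apply e1.congr'
        refine eventually_nhdsWithin_of_forall (fun z hz => ?_)
        simp [hEdef, not_le.2 (mem_Ioi.1 hz)]
    · have hAt : ContinuousAt E x := by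
        have e1 : ContinuousAt (fun z : ℝ => PL w (Real.log z)) x :=
          (PL_continuous w).continuousAt.comp (Real.continuousAt_log h.ne')
        apply e1.congr
        filter_upwards [Ioi_mem_nhds h] with z hz
        simp [hEdef, not_le.2 (mem_Ioi.1 hz)]
      exact hAt.continuousWithinAt
  have h1top : Tendsto a₁ atTop atTop :=
    tendsto_atTop_mono (fun x => le_add_of_nonneg_right (Enn x)) tendsto_id
  -- conclusion
  refine ⟨a₁, a₂, ⟨⟨h1cont, h1mono, h10⟩, h1top⟩,
    ⟨⟨ha₂cont.continuousOn, ha₂mono, ha₂0⟩, ha₂top⟩, ?_⟩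
  intro s hs t ht
  rcases eq_or_lt_of_le hs with h | hs'
  · rw [← h, σ0 t ht, ha₂0, mul_zero, h10]
  · set x := Real.exp (-t) * a₂ s with hxdef
    have hxpos : 0 < x := mul_pos (Real.exp_pos _) (ha₂pos s hs')
    set k := ⌊Real.log x⌋ with hkdef
    have hlogle : Real.log x ≤ (k:ℝ) + 1 := (Int.lt_floor_add_one _).le
    have hxk : x ≤ Real.exp ((k:ℝ) + 1) := by
      rw [← Real.exp_log hxpos]
      exact Real.exp_le_exp.2 hlogle
    have hab : a₂ s = Real.exp t * x := by
      rw [hxdef, ← mul_assoc, ← Real.exp_add, add_neg_cancel, Real.exp_zero, one_mul]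
    have hwk : w k ≤ a₁ x := by
      have h1 : E x = PL w (Real.log x) := by simp [hEdef, not_le.2 hxpos]
      have h2 := PL_ge w wmono (Real.log x)
      have : a₁ x = x + E x := rfl
      rw [this, h1]
      linarith [hxpos.le]
    refine le_trans ?_ hwk
    rcases le_or_gt (a₂ s) (Real.exp (((k:ℝ) + 1) / 2)) with hcase | hcase
    · -- small s case
      have hs2 : s ≤ Real.exp (((k:ℝ) + 1) / 2) := (ha₂ge s hs).trans hcase
      have e1 : σ s t ≤ σ s 0 := σAt s hs self_mem_Ici (mem_Ici.2 ht) ht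
      have e2 : σ s 0 ≤ σ (Real.exp (((k:ℝ) + 1) / 2)) 0 :=
        σMs 0 le_rfl (mem_Ici.2 hs) (mem_Ici.2 (Real.exp_pos _).le) hs2
      exact (e1.trans e2).trans (le_max_left _ _)
    · have hta : Real.exp (((k:ℝ) + 1) / 2) < Real.exp (t + ((k:ℝ) + 1)) := by
        calc Real.exp (((k:ℝ) + 1) / 2) < a₂ s := hcase
          _ = Real.exp t * x := hab
          _ ≤ Real.exp t * Real.exp ((k:ℝ) + 1) :=
            mul_le_mul_of_nonneg_left hxk (Real.exp_pos t).le
          _ = Real.exp (t + ((k:ℝ) + 1)) := (Real.exp_add _ _).symm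
      have htb : -((k:ℝ) + 1) / 2 ≤ t := by
        have := Real.exp_lt_exp.1 hta
        linarith
      rcases le_or_gt s 1 with hs1 | hs1
      · have e1 : σ s t ≤ σ 1 t := σMs t ht (mem_Ici.2 hs) (mem_Ici.2 zero_le_one) hs1
        have e2 : σ 1 t ≤ σ 1 (max 0 (-((k:ℝ) + 1) / 2)) :=
          σAt 1 zero_le_one (mem_Ici.2 (le_max_left _ _)) (mem_Ici.2 ht) (max_le ht htb)
        exact (e1.trans e2).trans (le_max_of_le_right (le_max_left _ _))
      · obtain ⟨j, hj⟩ : ∃ j : ℕ, ⌈s⌉ = (j:ℤ) + 2 := by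
          have h2 : (1:ℤ) < ⌈s⌉ := Int.lt_ceil.2 (by exact_mod_cast hs1)
          exact ⟨(⌈s⌉ - 2).toNat, by omega⟩
        have hsle : s ≤ (j:ℝ) + 2 := by
          have h1 := Int.le_ceil s
          rw [hj] at h1
          exact_mod_cast h1
        have hflnn : 0 ≤ ⌊s⌋ := Int.floor_nonneg.2 (by linarith)
        have hfl : (j:ℤ) + 1 ≤ ⌊s⌋ := by
          have := Int.ceil_le_floor_add_one s
          omega
        have hgs : τ (j + 4) ≤ PL g s := by
          refine le_trans ?_ (PL_ge g gmono s)
          exact hτmono (by omega)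
        have ha2s : Real.exp (τ (j + 4)) ≤ a₂ s := by
          calc Real.exp (τ (j + 4)) ≤ Real.exp (PL g s) := Real.exp_le_exp.2 hgs
            _ = 1 * Real.exp (PL g s) := (one_mul _).symm
            _ ≤ s * Real.exp (PL g s) :=
              mul_le_mul_of_nonneg_right (by linarith) (Real.exp_pos _).le
        have hta2 : Real.exp (τ (j + 4)) ≤ Real.exp (t + ((k:ℝ) + 1)) := by
          calc Real.exp (τ (j + 4)) ≤ a₂ s := ha2s
            _ = Real.exp t * x := hab
            _ ≤ Real.exp t * Real.exp ((k:ℝ) + 1) :=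
              mul_le_mul_of_nonneg_left hxk (Real.exp_pos t).le
            _ = Real.exp (t + ((k:ℝ) + 1)) := (Real.exp_add _ _).symm
        have htc : τ (j + 4) - ((k:ℝ) + 1) ≤ t := by
          have := Real.exp_le_exp.1 hta2
          linarith
        have e1 : σ s t ≤ σ ((j:ℝ) + 2) t :=
          σMs t ht (mem_Ici.2 hs) (mem_Ici.2 (by positivity)) hsle
        have e2 : σ ((j:ℝ) + 2) t ≤ f j ((k:ℝ) + 1) :=
          σAt ((j:ℝ) + 2) (by positivity) (mem_Ici.2 (le_max_left _ _)) (mem_Ici.2 ht)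
            (max_le ht htc)
        exact ((e1.trans e2).trans (Sle j _)).trans (le_max_of_le_right (le_max_right _ _))
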